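/- Let n ≥ 2 and let α_1,…,α_{n−1} ≥ 0. For each i ∈ {1,…,n−1} put S_i = {x ∈ ℝⁿ : |x_{i+1} − x_i| ≤ α_i}, and let S_odd be the intersection of the sets S_i over all odd i ∈ {1,…,n−1}. Then for every x ∈ ℝⁿ, the projection of x onto S_odd is the vector obtained from x by replacing, for each odd i ∈ {1,…,n−1}, the pair of coordinates (x_i, x_{i+1}) by: ((x_i + x_{i+1} + α_i)/2, (x_i + x_{i+1} − α_i)/2) if x_i − x_{i+1} > α_i; (x_i, x_{i+1}) if |x_{i+1} − x_i| ≤ α_i; and ((x_i + x_{i+1} − α_i)/2, (x_i + x_{i+1} + α_i)/2) if x_{i+1} − x_i > α_i; the last coordinate x_n is left unchanged when n is odd. -/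

import Mathlib

open scoped Classical

lemma sum_pair_le (f g : ℕ → ℝ) (n : ℕ)
    (h1 : ∀ k, k + 1 < n → k % 2 = 0 → f k + f (k+1) ≤ g k + g (k+1))
    (h2 : ∀ k, k + 1 = n → k % 2 = 0 → f k ≤ g k) :
    ∑ k ∈ Finset.range n, f k ≤ ∑ k ∈ Finset.range n, g k := by
  induction n using Nat.strong_induction_on with
  | _ n ih =>
    match n, h1, h2 with
    | 0, h1, h2 => simp
    | (m+1), h1, h2 =>
      rcases Nat.even_or_odd m with hm | hm
      · rw [Finset.sum_range_succ, Finset.sum_range_succ]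
        have := h2 m rfl (Nat.even_iff.mp hm)
        have hrec := ih m (by omega) (fun k hk he => h1 k (by omega) he)
          (fun k hk he => by exfalso; have := Nat.even_iff.mp hm; omega)
        linarith
      · obtain ⟨l, rfl⟩ : ∃ l, m = l + 1 := ⟨m - 1, by have := Nat.odd_iff.mp hm; omega⟩
        rw [Finset.sum_range_succ, Finset.sum_range_succ,
            Finset.sum_range_succ, Finset.sum_range_succ]
        have hle : l % 2 = 0 := by
          rcases Nat.odd_iff.mp hm with h; omega
        have := h1 l (by omega) hle
        have hrec := ih l (by omega) (fun k hk he => h1 k (by omega) he)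
          (fun k hk he => by exfalso; omega)
        linarith

lemma core1 (α a b p w : ℝ) (h1 : -α ≤ w - p) (hc : a - b > α) :
    (a - (a+b+α)/2)^2 + (b - (a+b-α)/2)^2 ≤ (a-p)^2 + (b-w)^2 := by
  nlinarith [sq_nonneg (a - p + b - w),
    mul_nonneg (show (0:ℝ) ≤ (a-p)-(b-w)-(a-b-α) by linarith)
      (show (0:ℝ) ≤ (a-p)-(b-w)+(a-b-α) by linarith)]

lemma core2 (α a b p w : ℝ) (h2 : w - p ≤ α) (hc : b - a > α) :
    (a - (a+b-α)/2)^2 + (b - (a+b+α)/2)^2 ≤ (a-p)^2 + (b-w)^2 := by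
  nlinarith [sq_nonneg (a - p + b - w),
    mul_nonneg (show (0:ℝ) ≤ (b-w)-(a-p)-(b-a-α) by linarith)
      (show (0:ℝ) ≤ (b-w)-(a-p)+(b-a-α) by linarith)]

theorem stmt_2 (n : ℕ) (hn : 2 ≤ n) (α : ℕ → ℝ) (hα : ∀ j, 0 ≤ α j)
    (x : EuclideanSpace ℝ (Fin n)) :
    let Sodd : Set (EuclideanSpace ℝ (Fin n)) :=
      {z | ∀ j : ℕ, ∀ h : j + 1 < n, j % 2 = 0 →
        |z ⟨j + 1, h⟩ - z ⟨j, by omega⟩| ≤ α j}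
    let q : EuclideanSpace ℝ (Fin n) := WithLp.toLp 2 (fun k : Fin n =>
      if (k : ℕ) % 2 = 0 then
        if h : (k : ℕ) + 1 < n then
          if x k - x ⟨(k : ℕ) + 1, h⟩ > α (k : ℕ) then
            (x k + x ⟨(k : ℕ) + 1, h⟩ + α (k : ℕ)) / 2
          else if x ⟨(k : ℕ) + 1, h⟩ - x k > α (k : ℕ) then
            (x k + x ⟨(k : ℕ) + 1, h⟩ - α (k : ℕ)) / 2
          else x k
        else x k
      else
        let j : Fin n := ⟨(k : ℕ) - 1, Nat.lt_of_le_of_lt (Nat.sub_le _ _) k.isLt⟩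
        if x j - x k > α ((k : ℕ) - 1) then (x j + x k - α ((k : ℕ) - 1)) / 2
        else if x k - x j > α ((k : ℕ) - 1) then (x j + x k + α ((k : ℕ) - 1)) / 2
        else x k)
    q ∈ Sodd ∧ ∀ z ∈ Sodd, ‖x - q‖ ≤ ‖x - z‖ := by
  intro Sodd q
  -- evaluation lemmas
  have qe : ∀ (j : ℕ) (pj : j < n) (h : j + 1 < n), j % 2 = 0 →
      q ⟨j, pj⟩ =
        if x ⟨j, pj⟩ - x ⟨j+1, h⟩ > α j then (x ⟨j, pj⟩ + x ⟨j+1, h⟩ + α j) / 2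
        else if x ⟨j+1, h⟩ - x ⟨j, pj⟩ > α j then (x ⟨j, pj⟩ + x ⟨j+1, h⟩ - α j) / 2
        else x ⟨j, pj⟩ := by
    intro j pj h hj
    show (if j % 2 = 0 then _ else _) = _
    rw [if_pos hj, dif_pos h]
  have qe2 : ∀ (j : ℕ) (pj : j < n), j % 2 = 0 → ¬ (j + 1 < n) →
      q ⟨j, pj⟩ = x ⟨j, pj⟩ := by
    intro j pj hj h
    show (if j % 2 = 0 then _ else _) = _
    rw [if_pos hj, dif_neg h]
  have qo : ∀ (j : ℕ) (pj : j < n) (h : j + 1 < n), j % 2 = 0 →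
      q ⟨j+1, h⟩ =
        if x ⟨j, pj⟩ - x ⟨j+1, h⟩ > α j then (x ⟨j, pj⟩ + x ⟨j+1, h⟩ - α j) / 2
        else if x ⟨j+1, h⟩ - x ⟨j, pj⟩ > α j then (x ⟨j, pj⟩ + x ⟨j+1, h⟩ + α j) / 2
        else x ⟨j+1, h⟩ := by
    intro j pj h hj
    show (if (j+1) % 2 = 0 then _ else _) = _
    rw [if_neg (by omega)]
    simp only [Nat.add_sub_cancel]
  constructor
  · intro j h hj
    have pj : j < n := by omega
    rw [qe j pj h hj, qo j pj h hj]
    split_ifs with c1 c2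
    · rw [abs_le]; constructor <;> [linarith [hα j]; linarith [hα j]]
    · rw [abs_le]; constructor <;> [linarith [hα j]; linarith [hα j]]
    · rw [abs_le]; constructor <;> linarith
  · intro z hz
    rw [EuclideanSpace.norm_eq, EuclideanSpace.norm_eq]
    apply Real.sqrt_le_sqrt
    simp only [PiLp.sub_apply, Real.norm_eq_abs, sq_abs]
    set F : ℕ → ℝ := fun k => if hk : k < n then (x ⟨k, hk⟩ - q ⟨k, hk⟩)^2 else 0 with hF
    set G : ℕ → ℝ := fun k => if hk : k < n then (x ⟨k, hk⟩ - z ⟨k, hk⟩)^2 else 0 with hG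
    have eF : ∑ i : Fin n, (x i - q i)^2 = ∑ k ∈ Finset.range n, F k := by
      rw [Finset.sum_range]
      refine Finset.sum_congr rfl fun i _ => ?_
      rw [hF]; simp only []
      rw [dif_pos i.isLt]
    have eG : ∑ i : Fin n, (x i - z i)^2 = ∑ k ∈ Finset.range n, G k := by
      rw [Finset.sum_range]
      refine Finset.sum_congr rfl fun i _ => ?_
      rw [hG]; simp only []
      rw [dif_pos i.isLt]
    rw [eF, eG]
    apply sum_pair_le
    · intro k hk hke
      have pk : k < n := by omega
      rw [hF, hG]; simp only []
      rw [dif_pos pk, dif_pos pk, dif_pos hk, dif_pos hk]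
      have hzz : |z ⟨k+1, hk⟩ - z ⟨k, pk⟩| ≤ α k := hz k hk hke
      rw [abs_le] at hzz
      obtain ⟨hz1, hz2⟩ := hzz
      rw [qe k pk hk hke, qo k pk hk hke]
      split_ifs with c1 c2
      · exact core1 (α k) _ _ _ _ (by linarith) c1
      · exact core2 (α k) _ _ _ _ (by linarith) c2
      · nlinarith [sq_nonneg (x ⟨k, pk⟩ - z ⟨k, pk⟩), sq_nonneg (x ⟨k+1, hk⟩ - z ⟨k+1, hk⟩)]
    · intro k hk hke
      have pk : k < n := by omega
      rw [hF, hG]; simp only []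
      rw [dif_pos pk, dif_pos pk, qe2 k pk hke (by omega)]
      nlinarith [sq_nonneg (x ⟨k, pk⟩ - z ⟨k, pk⟩)]
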